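/- Let U_j = D_j y_j - (a/2)∑_{i<j} s_{ij} be the type-A Cherednik operators. Then the product identity (∏_{j=1}^r D_j)(∏_{j=1}^r y_j) = ∏_{j=1}^r U_j holds as operators on polynomials, where the products of D_j's and of U_j's are taken in the order j = 1, …, r. -/

import Mathlib

open MvPolynomial Finset

noncomputable section

abbrev Pol (r : ℕ) : Type := MvPolynomial (Fin r) ℂ

/-- Multiplication operator by a polynomial. -/
def mulOp {r : ℕ} (p : Pol r) : Module.End ℂ (Pol r) := LinearMap.mulLeft ℂ p

/-- Partial derivative operator. -/
def pd {r : ℕ} (j : Fin r) : Module.End ℂ (Pol r) := (pderiv j).toLinearMap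

/-- The transposition operator `s_{ij}` swapping the variables `i` and `j`. -/
def swOp {r : ℕ} (i j : Fin r) : Module.End ℂ (Pol r) :=
  (rename ⇑(Equiv.swap i j) : Pol r →ₐ[ℂ] Pol r).toLinearMap

/-- Ordered product `f 0 * f 1 * ⋯ * f (r-1)` of operators. -/
def opProd {r : ℕ} (f : Fin r → Module.End ℂ (Pol r)) : Module.End ℂ (Pol r) :=
  ((List.finRange r).map f).prod

/-- The type-A Dunkl operator `D_j = ∂_j + (a/2) ∑_{i ≠ j} q i j`, where `q i j` is the
difference-quotient operator `f ↦ (y_j - y_i)⁻¹ (1 - s_{ij}) f` (given as data, pinned down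
by the divisibility specification `DunklQuotA`). -/
def dunklA {r : ℕ} (a : ℂ) (q : Fin r → Fin r → Module.End ℂ (Pol r)) (j : Fin r) :
    Module.End ℂ (Pol r) :=
  pd j + (a / 2) • ∑ i ∈ Finset.univ.erase j, q i j

/-- Specification: `q i j` is division of `(1 - s_{ij}) f` by `y_j - y_i`. -/
def DunklQuotA {r : ℕ} (q : Fin r → Fin r → Module.End ℂ (Pol r)) : Prop :=
  ∀ i j : Fin r, i ≠ j → ∀ f : Pol r,
    (X j - X i) * q i j f = f - swOp i j f

/-- The type-A Cherednik operator `U_j = D_j y_j - (a/2) ∑_{i<j} s_{ij}`. -/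
def cherednikA {r : ℕ} (a : ℂ) (q : Fin r → Fin r → Module.End ℂ (Pol r)) (j : Fin r) :
    Module.End ℂ (Pol r) :=
  dunklA a q j * mulOp (X j) - (a / 2) • ∑ i ∈ Finset.univ.filter (fun i => i < j), swOp i j

/-! ### Auxiliary lemmas -/

lemma mulOp_apply {r : ℕ} (p f : Pol r) : mulOp p f = p * f := rfl

lemma swOp_apply {r : ℕ} (i j : Fin r) (f : Pol r) :
    swOp i j f = rename (Equiv.swap i j) f := rfl

lemma mulOp_mul {r : ℕ} (p q : Pol r) : mulOp (p * q) = mulOp p * mulOp q := by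
  apply LinearMap.ext; intro f
  simp [mulOp_apply, Module.End.mul_apply, mul_assoc]

lemma mulOp_one {r : ℕ} : mulOp (1 : Pol r) = 1 := by
  apply LinearMap.ext; intro f
  show (1 : Pol r) * f = f
  rw [one_mul]

lemma swOp_mulOp {r : ℕ} (i j : Fin r) (p : Pol r) :
    swOp i j * mulOp p = mulOp (rename (Equiv.swap i j) p) * swOp i j := by
  apply LinearMap.ext; intro f
  simp [Module.End.mul_apply, swOp_apply, mulOp_apply, map_mul]

lemma Xsub_ne_zero {r : ℕ} {i m : Fin r} (h : i ≠ m) : (X m - X i : Pol r) ≠ 0 :=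
  sub_ne_zero.mpr fun h' => h ((X_injective h').symm)

lemma q_comm {r : ℕ} {q : Fin r → Fin r → Module.End ℂ (Pol r)} (hq : DunklQuotA q)
    {i l m : Fin r} (him : i ≠ m) (hlm : l ≠ m) (hil : i ≠ l) :
    q i m * mulOp (X l) = mulOp (X l) * q i m := by
  apply LinearMap.ext; intro f
  apply mul_left_cancel₀ (Xsub_ne_zero him)
  have hs : swOp i m (X l * f) = X l * swOp i m f := by
    rw [swOp_apply, map_mul, rename_X, Equiv.swap_apply_of_ne_of_ne hil.symm hlm,
      ← swOp_apply]
  simp only [Module.End.mul_apply, mulOp_apply]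
  rw [hq i m him (X l * f), hs]
  linear_combination (-X l) * hq i m him f

lemma q_comm_self {r : ℕ} {q : Fin r → Fin r → Module.End ℂ (Pol r)} (hq : DunklQuotA q)
    {l m : Fin r} (hlm : l ≠ m) :
    q l m * mulOp (X l) = mulOp (X l) * q l m - swOp l m := by
  apply LinearMap.ext; intro f
  apply mul_left_cancel₀ (Xsub_ne_zero hlm)
  have hs : swOp l m (X l * f) = X m * swOp l m f := by
    rw [swOp_apply, map_mul, rename_X, Equiv.swap_apply_left, ← swOp_apply]
  simp only [Module.End.mul_apply, LinearMap.sub_apply, mulOp_apply]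
  rw [hq l m hlm (X l * f), hs]
  linear_combination (-X l) * hq l m hlm f

lemma pd_comm {r : ℕ} {l m : Fin r} (hlm : l ≠ m) :
    pd m * mulOp (X l) = mulOp (X l) * pd m := by
  apply LinearMap.ext; intro f
  simp [pd, mulOp_apply, Module.End.mul_apply, pderiv_mul, pderiv_X_of_ne hlm]

lemma dunkl_comm {r : ℕ} {q : Fin r → Fin r → Module.End ℂ (Pol r)} (hq : DunklQuotA q)
    (a : ℂ) {l m : Fin r} (hlm : l ≠ m) :
    dunklA a q m * mulOp (X l) = mulOp (X l) * dunklA a q m - (a / 2) • swOp l m := by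
  have hl : l ∈ Finset.univ.erase m := Finset.mem_erase.mpr ⟨hlm, Finset.mem_univ l⟩
  have hsum : (∑ i ∈ Finset.univ.erase m, q i m) * mulOp (X l)
      = mulOp (X l) * (∑ i ∈ Finset.univ.erase m, q i m) - swOp l m := by
    rw [Finset.sum_mul, Finset.mul_sum,
      ← Finset.add_sum_erase _ (fun i => q i m * mulOp (X l)) hl,
      ← Finset.add_sum_erase _ (fun i => mulOp (X l) * q i m) hl,
      q_comm_self hq hlm,
      Finset.sum_congr rfl (fun i hi => q_comm hq
        (Finset.mem_erase.mp (Finset.mem_erase.mp hi).2).1 hlm (Finset.mem_erase.mp hi).1)]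
    abel
  unfold dunklA
  rw [add_mul, mul_add, smul_mul_assoc, mul_smul_comm, hsum, pd_comm hlm, smul_sub]
  abel

lemma dunkl_comm_prod {r : ℕ} {q : Fin r → Fin r → Module.End ℂ (Pol r)} (hq : DunklQuotA q)
    (a : ℂ) {m : Fin r} (s : Finset (Fin r)) (hm : m ∉ s) :
    dunklA a q m * mulOp (∏ i ∈ s, X i) =
      mulOp (∏ i ∈ s, X i) * dunklA a q m
        - (a / 2) • ∑ i ∈ s, mulOp (∏ j ∈ s.erase i, X j) * swOp i m := by
  induction s using Finset.induction with
  | empty => simp [mulOp_one]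
  | @insert l s hls ih =>
    have hml : l ≠ m := fun h => hm (h ▸ Finset.mem_insert_self l s)
    have hms : m ∉ s := fun h => hm (Finset.mem_insert_of_mem h)
    have hren : rename (⇑(Equiv.swap l m)) (∏ i ∈ s, X i : Pol r) = ∏ i ∈ s, X i := by
      rw [map_prod]
      refine Finset.prod_congr rfl fun i hi => ?_
      rw [rename_X, Equiv.swap_apply_of_ne_of_ne (ne_of_mem_of_not_mem hi hls)
        (ne_of_mem_of_not_mem hi hms)]
    rw [Finset.prod_insert hls, mulOp_mul, ← mul_assoc, dunkl_comm hq a hml, sub_mul,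
      mul_assoc, ih hms, mul_sub, mul_smul_comm, Finset.mul_sum, smul_mul_assoc,
      swOp_mulOp, hren]
    have hsum : ∑ i ∈ insert l s, mulOp (∏ j ∈ (insert l s).erase i, X j) * swOp i m
        = mulOp (∏ j ∈ s, X j) * swOp l m
          + ∑ i ∈ s, mulOp (X l) * (mulOp (∏ j ∈ s.erase i, X j) * swOp i m) := by
      rw [Finset.sum_insert hls, Finset.erase_insert hls]
      congr 1
      refine Finset.sum_congr rfl fun i hi => ?_
      rw [Finset.erase_insert_of_ne (ne_of_mem_of_not_mem hi hls).symm,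
        Finset.prod_insert (fun h => hls (Finset.mem_of_mem_erase h)), mulOp_mul, mul_assoc]
    rw [hsum, smul_add, ← mul_assoc (mulOp (X l)) (mulOp (∏ i ∈ s, X i)) (dunklA a q m)]
    abel

lemma dunkl_mul_Y {r : ℕ} {q : Fin r → Fin r → Module.End ℂ (Pol r)} (hq : DunklQuotA q)
    (a : ℂ) (m : Fin r) :
    dunklA a q m * mulOp (∏ i ∈ Finset.univ.filter (fun i => i < m), X i) * mulOp (X m) =
      mulOp (∏ i ∈ Finset.univ.filter (fun i => i < m), X i) * cherednikA a q m := by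
  set s : Finset (Fin r) := Finset.univ.filter (fun i => i < m) with hs
  have hm : m ∉ s := by simp [hs]
  rw [dunkl_comm_prod hq a s hm, sub_mul, smul_mul_assoc, Finset.sum_mul]
  have hterm : ∀ i ∈ s, mulOp (∏ j ∈ s.erase i, X j) * swOp i m * mulOp (X m)
      = mulOp (∏ j ∈ s, X j) * swOp i m := by
    intro i hi
    rw [mul_assoc, swOp_mulOp, rename_X, Equiv.swap_apply_right, ← mul_assoc, ← mulOp_mul,
      Finset.prod_erase_mul s _ hi]
  rw [Finset.sum_congr rfl hterm, ← Finset.mul_sum, ← mul_smul_comm, cherednikA, mul_sub,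
    mul_assoc]

/-- The product identity `(∏ⱼ Dⱼ)(∏ⱼ yⱼ) = ∏ⱼ Uⱼ` for the type-A Dunkl and
Cherednik operators, both products over `j = 1,…,r` in increasing order. -/
theorem dunklA_prod_eq_cherednik_prod {r : ℕ} (a : ℂ)
    (q : Fin r → Fin r → Module.End ℂ (Pol r)) (hq : DunklQuotA q) :
    opProd (dunklA a q) * mulOp (∏ j : Fin r, X j) = opProd (cherednikA a q) := by
  have key : ∀ k : ℕ, k ≤ r →
      (((List.finRange r).take k).map (dunklA a q)).prod *
        mulOp (∏ i ∈ Finset.univ.filter (fun i : Fin r => (i : ℕ) < k), X i) =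
      (((List.finRange r).take k).map (cherednikA a q)).prod := by
    intro k
    induction k with
    | zero =>
      intro _
      have : Finset.univ.filter (fun i : Fin r => (i : ℕ) < 0) = ∅ := by
        apply Finset.filter_false_of_mem; intro i _; omega
      simp [this, mulOp_one]
    | succ k ih =>
      intro hk
      have hkr : k < r := hk
      have htake : (List.finRange r).take (k+1)
          = (List.finRange r).take k ++ [(⟨k, hkr⟩ : Fin r)] := by
        rw [List.take_succ]
        congr
        simp [List.getElem?_eq_getElem, hkr]
      have hmem : (⟨k, hkr⟩ : Fin r) ∉ Finset.univ.filter (fun i : Fin r => (i : ℕ) < k) := by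
        simp
      have hfilter : Finset.univ.filter (fun i : Fin r => (i : ℕ) < k + 1)
          = insert (⟨k, hkr⟩ : Fin r) (Finset.univ.filter (fun i : Fin r => (i : ℕ) < k)) := by
        ext i
        simp [Fin.ext_iff, Nat.lt_succ_iff_lt_or_eq]
        omega
      have hsetP : Finset.univ.filter (fun i : Fin r => i < (⟨k, hkr⟩ : Fin r))
          = Finset.univ.filter (fun i : Fin r => (i : ℕ) < k) := by
        apply Finset.filter_congr; intro i _; simp [Fin.lt_def]
      rw [htake, hfilter, Finset.prod_insert hmem, List.map_append, List.map_append,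
        List.prod_append, List.prod_append, List.map_singleton, List.map_singleton,
        List.prod_singleton, List.prod_singleton, mul_comm (X _), mulOp_mul]
      have h3 := dunkl_mul_Y hq a (⟨k, hkr⟩ : Fin r)
      rw [hsetP] at h3
      rw [← mul_assoc, mul_assoc _ (dunklA a q _) (mulOp _), mul_assoc, h3, ← mul_assoc,
        ih (Nat.le_of_lt hkr)]
  have h := key r le_rfl
  have h1 : (List.finRange r).take r = List.finRange r := by
    simp
  have h2 : Finset.univ.filter (fun i : Fin r => (i : ℕ) < r) = Finset.univ := by
    apply Finset.filter_true_of_mem; intro i _; exact i.isLt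
  rw [h1, h2] at h
  exact h
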